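/- Let γ₁ ≠ γ₂ be positive reals and q₁, q₂ > 0 with q₁ + q₂ = 1. Then the function θ ↦ q₁ p_{γ₁}(θ) - q₂ p_{γ₂}(θ) on [-π,π] is not identically zero, where p_γ is the wrapped normal distribution. -/

import Mathlib

open MeasureTheory Real

section AuxWrappedNormal
open Set

lemma cosGauss (B T : ℝ) (hB : 0 < B) :
    ∫ x : ℝ, Real.cos (T * x) * Real.exp (-B * x ^ 2)
      = Real.sqrt (π / B) * Real.exp (-T ^ 2 / (4 * B)) := by
  have hBc : (0 : ℝ) < (B : ℂ).re := by simpa using hB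
  have h := fourierIntegral_gaussian hBc (T : ℂ)
  have hint : Integrable fun x : ℝ => Complex.exp (Complex.I * T * x) * Complex.exp (-B * x ^ 2) := by
    have := integrable_cexp_quadratic hBc (Complex.I * T) 0
    refine this.congr ?_
    filter_upwards with x
    rw [← Complex.exp_add]
    ring_nf
  have hre := congrArg Complex.re h
  rw [← RCLike.re_eq_complex_re, ← integral_re hint, RCLike.re_eq_complex_re] at hre
  convert hre using 1
  · refine integral_congr_ae (Filter.Eventually.of_forall fun x => ?_)
    dsimp only
    have h1 : Complex.I * T * x = ((T * x : ℝ) : ℂ) * Complex.I := by push_cast; ring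
    have h2 : -(B:ℂ) * (x:ℂ) ^ 2 = ((-B * x ^ 2 : ℝ) : ℂ) := by push_cast; ring
    rw [h1, h2, ← Complex.ofReal_exp, Complex.mul_re, Complex.ofReal_re, Complex.ofReal_im,
      Complex.exp_ofReal_mul_I_re]
    ring
  · have h3 : ((π : ℂ) / B) ^ (1 / 2 : ℂ) = ((Real.sqrt (π / B) : ℝ) : ℂ) := by
      rw [Real.sqrt_eq_rpow, Complex.ofReal_cpow (by positivity)]
      push_cast
      ring_nf
    have h4 : -(T:ℂ) ^ 2 / (4 * B) = ((-T ^ 2 / (4 * B) : ℝ) : ℂ) := by push_cast; ring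
    rw [h3, h4, ← Complex.ofReal_exp, ← Complex.ofReal_mul, Complex.ofReal_re]

lemma key (γ : ℝ) (hγ : 0 < γ) (n : ℤ) :
    ∫ θ in Set.Ioc (-π) π,
        Real.cos (n * θ) * ∑' k : ℤ, Real.exp (-(θ + 2 * π * k) ^ 2 / (2 * γ))
      = Real.sqrt (2 * π * γ) * Real.exp (-γ * n ^ 2 / 2) := by
  have hB : (0:ℝ) < 1 / (2 * γ) := by positivity
  set B : ℝ := 1 / (2 * γ) with hBdef
  set g : ℝ → ℝ := fun u => Real.cos (n * u) * Real.exp (-B * u ^ 2) with hgdef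
  have hexp : ∀ x : ℝ, -x ^ 2 / (2 * γ) = -B * x ^ 2 := by
    intro x; rw [hBdef]; field_simp
  set f : ℤ → ℝ → ℝ := fun k θ => Real.cos (n * θ) * Real.exp (-(θ + 2 * π * k) ^ 2 / (2 * γ))
    with hfdef
  have hfg : ∀ k : ℤ, ∀ θ : ℝ, f k θ = g (θ + 2 * π * k) := by
    intro k θ
    have hcos : (n : ℝ) * (θ + 2 * π * k) = n * θ + (n * k : ℤ) * (2 * π) := by
      push_cast; ring
    simp only [hfdef, hgdef, hcos, Real.cos_add_int_mul_two_pi, hexp]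
  have hg_cont : Continuous g :=
    (Real.continuous_cos.comp (continuous_const.mul continuous_id)).mul (by fun_prop)
  have hg_int : Integrable g := by
    refine (integrable_exp_neg_mul_sq hB).bdd_mul
      ((Real.continuous_cos.comp (continuous_const.mul continuous_id)).aestronglyMeasurable)
      (c := 1) (Filter.Eventually.of_forall fun x => by simpa using Real.abs_cos_le_one _)
  have hmeas : ∀ k : ℤ, Measurable fun u : ℝ => ENNReal.ofReal (Real.exp (-B * (u + 2*π*k) ^ 2)) := by
    intro k; fun_prop
  -- the tiling sets
  set s : ℤ → Set ℝ := fun k => Ioc (-π + k • (2 * π)) (-π + (k + 1) • (2 * π)) with hsdef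
  have hs_eq : ∀ k : ℤ, s k = Ioc (-π + 2 * π * k) (π + 2 * π * k) := by
    intro k; simp only [hsdef, zsmul_eq_mul]; push_cast; rw [show -π + (k:ℝ) * (2 * π) = -π + 2 * π * k by ring,
      show -π + ((k:ℝ) + 1) * (2 * π) = π + 2 * π * k by ring]
  have hs_meas : ∀ k : ℤ, MeasurableSet (s k) := fun k => measurableSet_Ioc
  have hs_disj : Pairwise (Function.onFun Disjoint s) := pairwise_disjoint_Ioc_add_zsmul (-π) (2*π)
  have hs_union : ⋃ k : ℤ, s k = univ := iUnion_Ioc_add_zsmul two_pi_pos (-π)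
  -- translation for lintegral
  have htrans : ∀ k : ℤ, ∫⁻ θ in Ioc (-π) π, ENNReal.ofReal (Real.exp (-B * (θ + 2*π*k) ^ 2))
      = ∫⁻ u in s k, ENNReal.ofReal (Real.exp (-B * u ^ 2)) := by
    intro k
    have := (measurePreserving_add_right (volume : Measure ℝ) (2*π*k)).setLIntegral_comp_emb
      (MeasurableEquiv.addRight (2*π*k)).measurableEmbedding
      (fun u => ENNReal.ofReal (Real.exp (-B * u ^ 2))) (Ioc (-π) π)
    rw [hs_eq k]
    simpa [Set.image_add_const_Ioc, add_comm] using this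
  -- total mass of the tiled gaussian (lintegral version)
  have hsum_lint : ∑' k : ℤ, ∫⁻ θ in Ioc (-π) π,
      ENNReal.ofReal (Real.exp (-B * (θ + 2*π*k) ^ 2)) ∂volume
      = ENNReal.ofReal (∫ u : ℝ, Real.exp (-B * u ^ 2)) := by
    calc ∑' k : ℤ, ∫⁻ θ in Ioc (-π) π, ENNReal.ofReal (Real.exp (-B * (θ + 2*π*k) ^ 2)) ∂volume
        = ∑' k : ℤ, ∫⁻ u in s k, ENNReal.ofReal (Real.exp (-B * u ^ 2)) ∂volume := by
          exact tsum_congr htrans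
      _ = ∫⁻ u in ⋃ k : ℤ, s k, ENNReal.ofReal (Real.exp (-B * u ^ 2)) ∂volume := by
          rw [lintegral_iUnion hs_meas hs_disj]
      _ = ∫⁻ u : ℝ, ENNReal.ofReal (Real.exp (-B * u ^ 2)) ∂volume := by
          rw [hs_union, Measure.restrict_univ]
      _ = ENNReal.ofReal (∫ u : ℝ, Real.exp (-B * u ^ 2)) := by
          rw [← ofReal_integral_eq_lintegral_ofReal (integrable_exp_neg_mul_sq hB)
            (Filter.Eventually.of_forall fun x => (Real.exp_pos _).le)]
  -- swap integral and tsum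
  have hswap : ∫ θ in Ioc (-π) π, ∑' k : ℤ, f k θ = ∑' k : ℤ, ∫ θ in Ioc (-π) π, f k θ := by
    refine integral_tsum (fun k => ?_) ?_
    · exact ((Real.continuous_cos.comp (continuous_const.mul continuous_id)).mul
        (by fun_prop)).aestronglyMeasurable
    · have hle : ∀ k : ℤ, (∫⁻ θ in Ioc (-π) π, ↑‖f k θ‖₊ ∂volume)
          ≤ ∫⁻ θ in Ioc (-π) π, ENNReal.ofReal (Real.exp (-B * (θ + 2*π*k) ^ 2)) ∂volume := by
        intro k
        refine lintegral_mono fun θ => ?_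
        rw [← enorm_eq_nnnorm, ← ofReal_norm_eq_enorm]
        refine ENNReal.ofReal_le_ofReal ?_
        rw [hfdef]
        simp only [norm_mul, Real.norm_eq_abs, Real.abs_exp, hexp]
        exact mul_le_of_le_one_left (Real.exp_pos _).le (Real.abs_cos_le_one _)
      refine ne_top_of_le_ne_top ?_ (Summable.tsum_le_tsum hle ENNReal.summable ENNReal.summable)
      rw [hsum_lint]; exact ENNReal.ofReal_ne_top
  -- each term is the integral of g over a tile
  have hterm : ∀ k : ℤ, ∫ θ in Ioc (-π) π, f k θ = ∫ u in s k, g u := by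
    intro k
    have h1 : (-π : ℝ) ≤ π := by linarith [Real.pi_pos]
    have h2 : (-π : ℝ) + 2*π*k ≤ π + 2*π*k := by linarith [Real.pi_pos]
    rw [hs_eq k, ← intervalIntegral.integral_of_le h1, ← intervalIntegral.integral_of_le h2]
    rw [show (∫ θ in (-π)..π, f k θ) = ∫ θ in (-π)..π, g (θ + 2*π*k) by
      exact intervalIntegral.integral_congr fun θ _ => hfg k θ]
    rw [intervalIntegral.integral_comp_add_right g (2*π*k)]
  calc ∫ θ in Set.Ioc (-π) π, Real.cos (n * θ) * ∑' k : ℤ,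
          Real.exp (-(θ + 2 * π * k) ^ 2 / (2 * γ))
      = ∫ θ in Ioc (-π) π, ∑' k : ℤ, f k θ := by
        refine setIntegral_congr_fun measurableSet_Ioc fun θ _ => ?_
        rw [hfdef]
        exact (tsum_mul_left).symm
    _ = ∑' k : ℤ, ∫ θ in Ioc (-π) π, f k θ := hswap
    _ = ∑' k : ℤ, ∫ u in s k, g u := tsum_congr hterm
    _ = ∫ u in ⋃ k : ℤ, s k, g u := (integral_iUnion hs_meas hs_disj
        (hs_union ▸ hg_int.integrableOn)).symm
    _ = ∫ u : ℝ, g u := by rw [hs_union, Measure.restrict_univ]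
    _ = Real.sqrt (π / B) * Real.exp (-(n:ℝ) ^ 2 / (4 * B)) := cosGauss B n hB
    _ = Real.sqrt (2 * π * γ) * Real.exp (-γ * n ^ 2 / 2) := by
        rw [hBdef]
        congr 1
        · congr 1; field_simp
        · congr 1; field_simp; ring

end AuxWrappedNormal

open Set in
/-- The wrapped normal distribution on `[-π, π]` with parameter `γ`. -/
noncomputable def wrappedNormal (γ θ : ℝ) : ℝ :=
  (1 / Real.sqrt (2 * Real.pi * γ)) * ∑' k : ℤ, Real.exp (-(θ + 2 * Real.pi * k) ^ 2 / (2 * γ))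

/-- For `γ₁ ≠ γ₂`, the weighted difference of wrapped normal distributions is not
identically zero on `[-π, π]`. -/
theorem wrappedNormal_diff_ne_zero (γ₁ γ₂ q₁ q₂ : ℝ)
    (hγ₁ : 0 < γ₁) (hγ₂ : 0 < γ₂) (hne : γ₁ ≠ γ₂)
    (hq₁ : 0 < q₁) (hq₂ : 0 < q₂) (hq : q₁ + q₂ = 1) :
    ¬ ∀ θ ∈ Set.Icc (-Real.pi) Real.pi,
        q₁ * wrappedNormal γ₁ θ - q₂ * wrappedNormal γ₂ θ = 0 := by
  intro h
  have hIoc : ∀ θ ∈ Set.Ioc (-π) π, q₁ * wrappedNormal γ₁ θ = q₂ * wrappedNormal γ₂ θ := by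
    intro θ hθ
    have := h θ (Set.Ioc_subset_Icc_self hθ)
    linarith
  have hside : ∀ (γ q : ℝ), 0 < γ → ∀ m : ℤ,
      ∫ θ in Set.Ioc (-π) π, Real.cos (m * θ) * (q * wrappedNormal γ θ)
        = q * Real.exp (-γ * m ^ 2 / 2) := by
    intro γ q hγ m
    have hs : Real.sqrt (2 * π * γ) ≠ 0 := by positivity
    have hrw : (fun θ => Real.cos (m * θ) * (q * wrappedNormal γ θ)) = fun θ =>
        (q * (1 / Real.sqrt (2 * π * γ))) *
          (Real.cos (m * θ) * ∑' k : ℤ, Real.exp (-(θ + 2 * π * k) ^ 2 / (2 * γ))) := by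
      funext θ; unfold wrappedNormal; ring
    rw [hrw, integral_const_mul, key γ hγ m]
    field_simp
  have hmain : ∀ m : ℤ, q₁ * Real.exp (-γ₁ * m ^ 2 / 2) = q₂ * Real.exp (-γ₂ * m ^ 2 / 2) := by
    intro m
    rw [← hside γ₁ q₁ hγ₁ m, ← hside γ₂ q₂ hγ₂ m]
    exact setIntegral_congr_fun measurableSet_Ioc fun θ hθ => by rw [hIoc θ hθ]
  have h0 := hmain 0
  have h1 := hmain 1
  norm_num at h0 h1
  rw [h0] at h1
  field_simp at h1
  exact hne (by linarith [Real.exp_injective h1])
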